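/- The double integral ∫_0^∞ ∫_0^1 x^y · (1−x)/(1+x) dx dy converges and equals ln(π/2), where the outer integral is over y ∈ [0, ∞) and the inner over x ∈ [0, 1]. -/

import Mathlib

open MeasureTheory Real Set Filter

lemma exp_mul_int (c a b : ℝ) (hc : c ≠ 0) :
    ∫ t in a..b, Real.exp (c * t) = (Real.exp (c * b) - Real.exp (c * a)) / c := by
  have h : ∀ t : ℝ, HasDerivAt (fun t => Real.exp (c * t) / c) (Real.exp (c * t)) t := by
    intro t
    have := ((Real.hasDerivAt_exp (c * t)).comp t ((hasDerivAt_id t).const_mul c))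
    simpa [mul_comm, mul_div_assoc, mul_div_cancel_left₀ _ hc] using this.div_const c
  rw [intervalIntegral.integral_eq_sub_of_hasDerivAt (fun t _ => h t)
    ((Real.continuous_exp.comp (continuous_const.mul continuous_id)).intervalIntegrable a b)]
  ring

lemma exp_Ioi (b : ℝ) (hb : b < 0) :
    IntegrableOn (fun y => Real.exp (b * y)) (Ioi (0:ℝ)) ∧
      ∫ y in Ioi (0:ℝ), Real.exp (b * y) = 1 / (-b) := by
  have hi : IntegrableOn (fun y => Real.exp (b * y)) (Ioi (0:ℝ)) := by
    have := exp_neg_integrableOn_Ioi 0 (neg_pos.mpr hb)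
    simpa using this
  refine ⟨hi, ?_⟩
  have h : ∀ y : ℝ, HasDerivAt (fun t => Real.exp (b * t) / b) (Real.exp (b * y)) y := by
    intro t
    have := ((Real.hasDerivAt_exp (b * t)).comp t ((hasDerivAt_id t).const_mul b))
    simpa [mul_comm, mul_div_assoc, mul_div_cancel_left₀ _ hb.ne] using this.div_const b
  have htend : Tendsto (fun t => Real.exp (b * t) / b) atTop (nhds 0) := by
    have : Tendsto (fun t : ℝ => b * t) atTop atBot :=
      tendsto_id.const_mul_atTop_of_neg hb
    simpa using ((Real.tendsto_exp_atBot.comp this).div_const b)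
  have := integral_Ioi_of_hasDerivAt_of_tendsto' (fun x _ => h x) hi htend
  rw [this]
  rw [mul_zero, Real.exp_zero]
  rw [zero_sub, div_neg]

lemma inner_t_integral {x : ℝ} (hx : x ∈ Ioo (0:ℝ) 1) (a b : ℝ) (hab : a ≤ b) :
    ∫ t in Icc a b, x ^ t = (x ^ a - x ^ b) / (-Real.log x) := by
  have hlog : Real.log x < 0 := Real.log_neg hx.1 hx.2
  have hx0 : 0 < x := hx.1
  rw [setIntegral_congr_fun measurableSet_Icc
      (fun t _ => Real.rpow_def_of_pos hx0 t)]
  rw [integral_Icc_eq_integral_Ioc, ← intervalIntegral.integral_of_le hab]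
  rw [exp_mul_int (Real.log x) a b hlog.ne]
  rw [← Real.rpow_def_of_pos hx0, ← Real.rpow_def_of_pos hx0]
  rw [div_neg, ← neg_div, neg_sub]

lemma inner_x_integral {t : ℝ} (ht : 0 ≤ t) :
    ∫ x in Ioo (0:ℝ) 1, x ^ t = 1 / (t + 1) := by
  rw [← integral_Ioc_eq_integral_Ioo, ← intervalIntegral.integral_of_le (zero_le_one)]
  rw [integral_rpow (Or.inl (by linarith))]
  rw [Real.one_rpow, Real.zero_rpow (by positivity)]
  ring

lemma frullani {a b : ℝ} (ha : 0 ≤ a) (hab : a ≤ b) :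
    IntegrableOn (fun x : ℝ => (x ^ a - x ^ b) / (-Real.log x)) (Ioo (0:ℝ) 1) ∧
    ∫ x in Ioo (0:ℝ) 1, (x ^ a - x ^ b) / (-Real.log x) = Real.log ((b+1)/(a+1)) := by
  have hF : Measurable (fun p : ℝ × ℝ => p.1 ^ p.2) := measurable_fst.pow measurable_snd
  set s : Set (ℝ × ℝ) := Ioo (0:ℝ) 1 ×ˢ Icc a b with hs
  have hsm : volume s ≠ ⊤ := by
    rw [hs, Measure.volume_eq_prod, Measure.prod_prod]
    exact (ENNReal.mul_lt_top (by simp) (by simp)).ne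
  have hInt : IntegrableOn (fun p : ℝ × ℝ => p.1 ^ p.2) s := by
    apply Measure.integrableOn_of_bounded hsm hF.aestronglyMeasurable (M := 1)
    filter_upwards [ae_restrict_mem (measurableSet_Ioo.prod measurableSet_Icc)] with p hp
    rw [Real.norm_eq_abs, abs_of_nonneg (Real.rpow_nonneg hp.1.1.le _)]
    exact Real.rpow_le_one hp.1.1.le hp.1.2.le (ha.trans hp.2.1)
  have hprodInt : Integrable (fun p : ℝ × ℝ => p.1 ^ p.2)
      ((volume.restrict (Ioo (0:ℝ) 1)).prod (volume.restrict (Icc a b))) := by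
    rw [Measure.prod_restrict]
    rwa [IntegrableOn, Measure.volume_eq_prod] at hInt
  have h1 : ∫ z in s, (fun p : ℝ × ℝ => p.1 ^ p.2) z
      = ∫ x in Ioo (0:ℝ) 1, ∫ t in Icc a b, x ^ t := by
    rw [hs, Measure.volume_eq_prod]
    exact setIntegral_prod _ (by rwa [Measure.volume_eq_prod] at hInt)
  have h2 : ∫ z in s, (fun p : ℝ × ℝ => p.1 ^ p.2) z
      = ∫ t in Icc a b, ∫ x in Ioo (0:ℝ) 1, x ^ t := by
    rw [hs, Measure.volume_eq_prod, ← Measure.prod_restrict]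
    exact integral_prod_symm _ hprodInt
  constructor
  · have := hprodInt.integral_prod_left
    apply this.congr
    filter_upwards [ae_restrict_mem measurableSet_Ioo] with x hx
    exact inner_t_integral hx a b hab
  · have e1 : ∫ x in Ioo (0:ℝ) 1, (x ^ a - x ^ b) / (-Real.log x)
        = ∫ z in s, (fun p : ℝ × ℝ => p.1 ^ p.2) z := by
      rw [h1]
      exact setIntegral_congr_fun measurableSet_Ioo
        (fun x hx => (inner_t_integral hx a b hab).symm)
    rw [e1, h2]
    rw [setIntegral_congr_fun measurableSet_Icc (fun t ht => inner_x_integral (ha.trans ht.1))]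
    rw [integral_Icc_eq_integral_Ioc, ← intervalIntegral.integral_of_le hab]
    have : (∫ t in a..b, 1 / (t + 1)) = ∫ u in (a+1)..(b+1), 1 / u := by
      simpa using intervalIntegral.integral_comp_add_right (fun u => 1/u) 1 (a := a) (b := b)
    rw [this, integral_one_div]
    exact Set.notMem_uIcc_of_lt (by linarith) (by linarith)

noncomputable def fser (n : ℕ) (x : ℝ) : ℝ :=
  (x ^ (2*(n:ℝ)) - x ^ (2*(n:ℝ)+1)) / (-Real.log x)
    - (x ^ (2*(n:ℝ)+1) - x ^ (2*(n:ℝ)+2)) / (-Real.log x)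

noncomputable def Lser (n : ℕ) : ℝ :=
  Real.log ((2*(n:ℝ)+1+1)/(2*(n:ℝ)+1)) - Real.log ((2*(n:ℝ)+2+1)/(2*(n:ℝ)+1+1))

lemma fser_integrable (n : ℕ) : IntegrableOn (fser n) (Ioo (0:ℝ) 1) :=
  ((frullani (by positivity) (by linarith)).1.sub
    ((frullani (by positivity) (by linarith)).1))

lemma fser_integral (n : ℕ) : ∫ x in Ioo (0:ℝ) 1, fser n x = Lser n := by
  unfold fser Lser
  rw [integral_sub (frullani (by positivity) (by linarith)).1
    (frullani (by positivity) (by linarith)).1,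
    (frullani (a := 2*(n:ℝ)) (b := 2*(n:ℝ)+1) (by positivity) (by linarith)).2,
    (frullani (a := 2*(n:ℝ)+1) (b := 2*(n:ℝ)+2) (by positivity) (by linarith)).2]

lemma fser_eq {x : ℝ} (hx : x ∈ Ioo (0:ℝ) 1) (n : ℕ) :
    fser n x = (x^2)^n * ((1-x)^2 / (-Real.log x)) := by
  have hx0 : (0:ℝ) < x := hx.1
  have hlog : Real.log x < 0 := Real.log_neg hx.1 hx.2
  have e0 : x ^ (2*(n:ℝ)) = (x^2)^n := by
    rw [show (2*(n:ℝ)) = ((2*n : ℕ):ℝ) by push_cast; ring, Real.rpow_natCast, pow_mul]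
  have e1 : x ^ (2*(n:ℝ)+1) = (x^2)^n * x := by
    rw [show (2*(n:ℝ)+1) = ((2*n+1 : ℕ):ℝ) by push_cast; ring, Real.rpow_natCast,
      pow_succ, pow_mul]
  have e2 : x ^ (2*(n:ℝ)+2) = (x^2)^n * x^2 := by
    rw [show (2*(n:ℝ)+2) = ((2*n+2 : ℕ):ℝ) by push_cast; ring, Real.rpow_natCast,
      pow_add, pow_mul]
  unfold fser
  rw [e0, e1, e2]
  field_simp
  ring

lemma fser_hasSum {x : ℝ} (hx : x ∈ Ioo (0:ℝ) 1) :
    HasSum (fun n => fser n x) ((1-x) / ((1+x) * (-Real.log x))) := by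
  have hx0 : (0:ℝ) < x := hx.1
  have hx1 : x < 1 := hx.2
  have hlog : Real.log x < 0 := Real.log_neg hx0 hx1
  have hgeom : HasSum (fun n : ℕ => (x^2)^n) (1/(1-x^2)) := by
    simpa [one_div] using hasSum_geometric_of_lt_one (by positivity) (by nlinarith)
  have := hgeom.mul_right ((1-x)^2 / (-Real.log x))
  have heq : 1/(1-x^2) * ((1-x)^2 / (-Real.log x)) = (1-x) / ((1+x) * (-Real.log x)) := by
    have h3 : (1:ℝ) - x ≠ 0 := by linarith
    rw [div_mul_div_comm, one_mul,
      show ((1:ℝ)-x)^2 = (1-x)*(1-x) from by ring,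
      show ((1:ℝ)-x^2)*(-Real.log x) = (1-x)*((1+x)*(-Real.log x)) from by ring]
    exact mul_div_mul_left _ _ h3
  rw [heq] at this
  exact this.congr_fun fun n => fser_eq hx n

lemma Lser_nonneg (n : ℕ) : 0 ≤ Lser n := by
  unfold Lser
  rw [sub_nonneg]
  apply Real.log_le_log (by positivity)
  rw [div_le_div_iff₀ (by positivity) (by positivity)]
  nlinarith [Nat.cast_nonneg (α := ℝ) n]

lemma Lser_hasSum : HasSum Lser (Real.log (Real.pi / 2)) := by
  rw [hasSum_iff_tendsto_nat_of_nonneg Lser_nonneg]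
  have hW : Filter.Tendsto
      (fun k => ∏ i ∈ Finset.range k, ((2:ℝ) * i + 2) / (2 * i + 1) * ((2 * i + 2) / (2 * i + 3)))
      Filter.atTop (nhds (Real.pi / 2)) := Real.tendsto_prod_pi_div_two
  have hcont : Filter.Tendsto
      (fun k => Real.log (∏ i ∈ Finset.range k,
        ((2:ℝ) * i + 2) / (2 * i + 1) * ((2 * i + 2) / (2 * i + 3))))
      Filter.atTop (nhds (Real.log (Real.pi / 2))) :=
    ((Real.continuousAt_log (ne_of_gt (by positivity))).tendsto).comp hW
  convert hcont using 2 with k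
  rw [Real.log_prod]
  · apply Finset.sum_congr rfl
    intro i _
    unfold Lser
    rw [show (2*(i:ℝ)+1+1) = 2*i+2 by ring, show (2*(i:ℝ)+2+1) = 2*i+3 by ring]
    have h1 : ((2:ℝ) * i + 1) ≠ 0 := by positivity
    have h2 : ((2:ℝ) * i + 2) ≠ 0 := by positivity
    have h3 : ((2:ℝ) * i + 3) ≠ 0 := by positivity
    rw [Real.log_mul (by positivity) (by positivity), Real.log_div h2 h1, Real.log_div h2 h3,
      Real.log_div h3 h2]
    ring
  · intro i _
    positivity

noncomputable def gfun (x : ℝ) : ℝ := (1-x) / ((1+x) * (-Real.log x))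

lemma gfun_meas : Measurable gfun :=
  ((measurable_const.sub measurable_id).div
    ((measurable_const.add measurable_id).mul Real.measurable_log.neg))

lemma gfun_bound {x : ℝ} (hx : x ∈ Ioo (0:ℝ) 1) : 0 ≤ gfun x ∧ gfun x ≤ 1 := by
  have hlog : Real.log x < 0 := Real.log_neg hx.1 hx.2
  have hl : Real.log x ≤ x - 1 := Real.log_le_sub_one_of_pos hx.1
  have hd : 0 < (1+x) * (-Real.log x) := by
    apply mul_pos (by linarith [hx.1]) (by linarith)
  unfold gfun
  constructor
  · apply div_nonneg (by linarith [hx.2]) hd.le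
  · rw [div_le_one hd]
    nlinarith [hx.1.le, hx.2.le]

lemma gfun_integrable : IntegrableOn gfun (Ioo (0:ℝ) 1) := by
  apply Measure.integrableOn_of_bounded (M := 1) (by simp) gfun_meas.aestronglyMeasurable
  filter_upwards [ae_restrict_mem measurableSet_Ioo] with x hx
  rw [Real.norm_eq_abs, abs_of_nonneg (gfun_bound hx).1]
  exact (gfun_bound hx).2

lemma gfun_integral : ∫ x in Ioo (0:ℝ) 1, gfun x = Real.log (Real.pi / 2) := by
  have hmeas : ∀ n : ℕ, AEStronglyMeasurable (fser n) (volume.restrict (Ioo (0:ℝ) 1)) := by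
    intro n
    unfold fser
    apply Measurable.aestronglyMeasurable
    apply Measurable.sub <;>
      exact (((measurable_id.pow measurable_const).sub
        (measurable_id.pow measurable_const)).div Real.measurable_log.neg)
  have hlin : ∀ n : ℕ, ∫⁻ a in Ioo (0:ℝ) 1, ‖fser n a‖₊ = ENNReal.ofReal (Lser n) := by
    intro n
    have hnn : 0 ≤ᵐ[volume.restrict (Ioo (0:ℝ) 1)] fser n := by
      filter_upwards [ae_restrict_mem measurableSet_Ioo] with x hx
      rw [fser_eq hx n]
      have hlog : (0:ℝ) < -Real.log x := by
        have := Real.log_neg hx.1 hx.2; linarith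
      have h1 : (0:ℝ) ≤ (x^2)^n := by positivity
      have h2 : (0:ℝ) ≤ (1-x)^2 / (-Real.log x) := by positivity
      exact mul_nonneg h1 h2
    rw [← fser_integral n, ofReal_integral_eq_lintegral_ofReal (fser_integrable n) hnn]
    apply lintegral_congr_ae
    filter_upwards [hnn] with x hx
    rw [← Real.enorm_eq_ofReal hx]
    rfl
  have hsum : (∑' n, ∫⁻ a in Ioo (0:ℝ) 1, ‖fser n a‖₊) ≠ ⊤ := by
    simp_rw [hlin]
    rw [← ENNReal.ofReal_tsum_of_nonneg Lser_nonneg Lser_hasSum.summable]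
    exact ENNReal.ofReal_ne_top
  have h1 : ∫ x in Ioo (0:ℝ) 1, gfun x = ∫ x in Ioo (0:ℝ) 1, ∑' n, fser n x := by
    apply integral_congr_ae
    filter_upwards [ae_restrict_mem measurableSet_Ioo] with x hx
    exact ((fser_hasSum hx).tsum_eq).symm
  rw [h1, integral_tsum hmeas hsum]
  simp_rw [fser_integral]
  exact Lser_hasSum.tsum_eq

lemma inner_y {x : ℝ} (hx : x ∈ Ioo (0:ℝ) 1) :
    IntegrableOn (fun y => x ^ y * ((1-x)/(1+x))) (Ici (0:ℝ)) ∧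
    ∫ y in Ici (0:ℝ), x ^ y * ((1-x)/(1+x)) = gfun x := by
  have hx0 : (0:ℝ) < x := hx.1
  have hlog : Real.log x < 0 := Real.log_neg hx.1 hx.2
  have hfe : (fun y : ℝ => x ^ y * ((1-x)/(1+x)))
      = fun y => Real.exp (Real.log x * y) * ((1-x)/(1+x)) := by
    funext y; rw [Real.rpow_def_of_pos hx0]
  have h := exp_Ioi (Real.log x) hlog
  constructor
  · rw [hfe, integrableOn_Ici_iff_integrableOn_Ioi]
    exact h.1.mul_const _
  · rw [hfe, integral_Ici_eq_integral_Ioi, MeasureTheory.integral_mul_const, h.2]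
    unfold gfun
    rw [div_mul_div_comm, one_mul, mul_comm (-Real.log x)]

lemma ae_Ioo : ∀ᵐ x ∂(volume.restrict (Icc (0:ℝ) 1)), x ∈ Ioo (0:ℝ) 1 := by
  rw [Measure.restrict_congr_set Ioo_ae_eq_Icc.symm]
  exact ae_restrict_mem measurableSet_Ioo

theorem stmt_11 :
    IntegrableOn (fun p : ℝ × ℝ => p.1 ^ p.2 * ((1 - p.1) / (1 + p.1)))
        (Set.Icc 0 1 ×ˢ Set.Ici 0) ∧
      ∫ p in (Set.Icc (0:ℝ) 1 ×ˢ Set.Ici (0:ℝ)),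
          p.1 ^ p.2 * ((1 - p.1) / (1 + p.1)) = Real.log (Real.pi / 2) := by
  set F : ℝ × ℝ → ℝ := fun p => p.1 ^ p.2 * ((1 - p.1) / (1 + p.1)) with hF
  have hFmeas : Measurable F :=
    (measurable_fst.pow measurable_snd).mul
      ((measurable_const.sub measurable_fst).div (measurable_const.add measurable_fst))
  have hInt : IntegrableOn F (Icc (0:ℝ) 1 ×ˢ Ici (0:ℝ)) := by
    refine ⟨hFmeas.aestronglyMeasurable, ?_⟩
    rw [HasFiniteIntegral, Measure.volume_eq_prod, ← Measure.prod_restrict,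
      lintegral_prod _ (hFmeas.enorm.aemeasurable)]
    have hb : ∀ᵐ x ∂(volume.restrict (Icc (0:ℝ) 1)),
        (∫⁻ y in Ici (0:ℝ), ‖F (x, y)‖₊) ≤ 1 := by
      filter_upwards [ae_Ioo] with x hx
      have h := inner_y hx
      have hnn : 0 ≤ᵐ[volume.restrict (Ici (0:ℝ))] fun y => x ^ y * ((1-x)/(1+x)) := by
        apply Filter.Eventually.of_forall
        intro y
        have : (0:ℝ) ≤ (1-x)/(1+x) := by
          apply div_nonneg (by linarith [hx.2]) (by linarith [hx.1])
        exact mul_nonneg (Real.rpow_nonneg hx.1.le y) this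
      have he : (∫⁻ y in Ici (0:ℝ), ‖F (x, y)‖₊) = ENNReal.ofReal (gfun x) := by
        rw [← h.2, ofReal_integral_eq_lintegral_ofReal h.1 hnn]
        apply lintegral_congr_ae
        filter_upwards [hnn] with y hy
        rw [← Real.enorm_eq_ofReal hy]
        rfl
      rw [he]
      calc ENNReal.ofReal (gfun x) ≤ ENNReal.ofReal 1 :=
            ENNReal.ofReal_le_ofReal (gfun_bound hx).2
        _ = 1 := ENNReal.ofReal_one
    calc ∫⁻ x in Icc (0:ℝ) 1, ∫⁻ y in Ici (0:ℝ), ‖F (x, y)‖₊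
        ≤ ∫⁻ _ in Icc (0:ℝ) 1, 1 := lintegral_mono_ae hb
      _ = volume (Icc (0:ℝ) 1) := by rw [setLIntegral_const, one_mul]
      _ < ⊤ := by simp
  refine ⟨hInt, ?_⟩
  have hprod : ∫ p in (Icc (0:ℝ) 1 ×ˢ Ici (0:ℝ)), F p
      = ∫ x in Icc (0:ℝ) 1, ∫ y in Ici (0:ℝ), F (x, y) := by
    rw [Measure.volume_eq_prod]
    apply setIntegral_prod
    rwa [IntegrableOn, Measure.volume_eq_prod] at hInt
  rw [hprod]
  have : ∫ x in Icc (0:ℝ) 1, ∫ y in Ici (0:ℝ), F (x, y)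
      = ∫ x in Ioo (0:ℝ) 1, gfun x := by
    rw [Measure.restrict_congr_set Ioo_ae_eq_Icc.symm]
    apply integral_congr_ae
    filter_upwards [ae_restrict_mem measurableSet_Ioo] with x hx
    exact (inner_y hx).2
  rw [this, gfun_integral]
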